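/- Let X be a real Banach space, φ : X → (-∞, +∞] proper convex l.s.c., z ∈ X, z* ∈ X*, λ > 0, and Ψ(x) = (1/2)‖x - z‖² + λφ(x) - λ⟨x, z*⟩. Then for every ε > 0 there exist x_ε ∈ X, u*_ε ∈ X* with ‖u*_ε‖ ≤ 1, y*_ε ∈ J_X(x_ε - z), and x*_ε ∈ ∂φ(x_ε) such that λz* - λx*_ε = y*_ε + ε u*_ε, where J_X is the duality mapping. -/

import Mathlib

noncomputable section

variable {X : Type*} [NormedAddCommGroup X] [NormedSpace ℝ X] [CompleteSpace X]

/-- The subdifferential of an extended-real-valued function `φ : X → (-∞,+∞]`,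
viewed as a subset of `X × X*`: `(x, x*) ∈ ∂φ` iff `⟨y - x, x*⟩ + φ(x) ≤ φ(y)` for all `y`. -/
def subdiff (φ : X → EReal) : Set (X × (X →L[ℝ] ℝ)) :=
  {p | ∀ y : X, ((p.2 (y - p.1) : ℝ) : EReal) + φ p.1 ≤ φ y}

/-- Convexity for extended-real-valued functions. -/
def ERealConvexOn {E : Type*} [AddCommGroup E] [Module ℝ E] (φ : E → EReal) : Prop :=
  ∀ x y : E, ∀ a b : ℝ, 0 ≤ a → 0 ≤ b → a + b = 1 →
    φ (a • x + b • y) ≤ (a : EReal) * φ x + (b : EReal) * φ y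

/-- A function `X → (-∞,+∞]` is proper: it never takes the value `-∞` and is
finite somewhere. -/
def ProperFn {E : Type*} (φ : E → EReal) : Prop :=
  (∀ x, φ x ≠ ⊥) ∧ (∃ x, φ x ≠ ⊤)

/-- The duality mapping `J_X(x) = {x* : ⟨x, x*⟩ = ‖x‖² = ‖x*‖²}`. -/
def dualityMap (x : X) : Set (X →L[ℝ] ℝ) :=
  {x' | x' x = ‖x‖ ^ 2 ∧ ‖x‖ ^ 2 = ‖x'‖ ^ 2}

/-- A monotone subset of `X × X*`. -/
def MonotoneSet (A : Set (X × (X →L[ℝ] ℝ))) : Prop :=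
  ∀ p ∈ A, ∀ q ∈ A, 0 ≤ (p.2 - q.2) (p.1 - q.1)

/-- A maximal monotone subset of `X × X*`. -/
def MaximalMonotoneSet (A : Set (X × (X →L[ℝ] ℝ))) : Prop :=
  MonotoneSet A ∧
    ∀ p : X × (X →L[ℝ] ℝ), (∀ q ∈ A, 0 ≤ (p.2 - q.2) (p.1 - q.1)) → p ∈ A

/-- The Fitzpatrick function of an operator `A : X ⇉ X*`:
`H_A(x, x*) = sup {⟨u, x*⟩ + ⟨x, u*⟩ - ⟨u, u*⟩ : (u, u*) ∈ A}`. -/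
def fitz (A : Set (X × (X →L[ℝ] ℝ))) (p : X × (X →L[ℝ] ℝ)) : EReal :=
  ⨆ q ∈ A, ((p.2 q.1 + q.2 p.1 - q.2 q.1 : ℝ) : EReal)

/-- `(x*, x) ∈ ∂H_A(u, u*)`, the subdifferential of the Fitzpatrick function at `(u, u*)`
with the pairing `⟨(x*, x), (z, z*)⟩ = ⟨z, x*⟩ + ⟨x, z*⟩`:
`⟨z - u, x*⟩ + ⟨x, z* - u*⟩ + H(u, u*) ≤ H(z, z*)` for all `(z, z*)`. -/
def inSubdiffFitz (A : Set (X × (X →L[ℝ] ℝ))) (u : X) (u' : X →L[ℝ] ℝ)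
    (x' : X →L[ℝ] ℝ) (x : X) : Prop :=
  ∀ z : X, ∀ z' : X →L[ℝ] ℝ,
    ((x' (z - u) + (z' - u') x : ℝ) : EReal) + fitz A (u, u') ≤ fitz A (z, z')


open Set Filter Topology

set_option linter.unusedSectionVars false
set_option linter.unusedVariables false
set_option maxHeartbeats 1000000

lemma lsc_coe_add {X : Type*} [TopologicalSpace X] (c : X → ℝ) (hc : Continuous c)
    (g : X → EReal) (hg : LowerSemicontinuous g) :
    LowerSemicontinuous (fun x => ((c x : ℝ) : EReal) + g x) := by
  intro x y hy
  rcases eq_or_ne (g x) ⊥ with hb | hb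
  · simp [hb] at hy
  rcases eq_or_ne (g x) ⊤ with ht | ht
  · have hyt : y ≠ ⊤ := (hy.trans_le le_top).ne
    obtain ⟨Y, hY⟩ : ∃ Y : ℝ, y ≤ (Y : EReal) := by
      rcases eq_or_ne y ⊥ with h | h
      · exact ⟨0, by simp [h]⟩
      · exact ⟨y.toReal, by rw [EReal.coe_toReal hyt h]⟩
    set B : ℝ := Y - c x + 1 with hB
    have h1 : ∀ᶠ z in 𝓝 x, (B : EReal) < g z := hg x _ (by simp [ht])
    have h2 : ∀ᶠ z in 𝓝 x, c x - 1 < c z :=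
      hc.continuousAt.eventually (eventually_gt_nhds (by linarith))
    filter_upwards [h1, h2] with z hz1 hz2
    calc y ≤ (Y : EReal) := hY
      _ < ((c z + B : ℝ) : EReal) := by exact_mod_cast by linarith
      _ = (c z : EReal) + (B : EReal) := by exact_mod_cast rfl
      _ ≤ (c z : EReal) + g z := add_le_add_right hz1.le _
  · -- g x real
    set r : ℝ := (g x).toReal with hr
    have hgx : g x = (r : EReal) := (EReal.coe_toReal ht hb).symm
    have hy' : y < ((c x + r : ℝ) : EReal) := by
      rw [EReal.coe_add]; simp only [] at hy; rw [hgx] at hy; exact hy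
    obtain ⟨y', hy1, hy2⟩ := EReal.exists_between_coe_real hy'
    have hy2' : y' < c x + r := by exact_mod_cast hy2
    set η : ℝ := (c x + r - y') / 2 with hη
    have hηpos : 0 < η := by simp only [hη]; linarith
    have h1 : ∀ᶠ z in 𝓝 x, ((r - η : ℝ) : EReal) < g z := by
      apply hg x _ ; rw [hgx]; exact_mod_cast by linarith
    have h2 : ∀ᶠ z in 𝓝 x, c x - η < c z :=
      hc.continuousAt.eventually (eventually_gt_nhds (by linarith))
    filter_upwards [h1, h2] with z hz1 hz2
    calc y ≤ (y' : EReal) := hy1.le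
      _ < ((c z + (r - η) : ℝ) : EReal) := by exact_mod_cast by linarith
      _ = (c z : EReal) + ((r - η : ℝ) : EReal) := by exact_mod_cast rfl
      _ ≤ (c z : EReal) + g z := add_le_add_right hz1.le _

lemma prod_clm_eq (Λ : (X × ℝ) →L[ℝ] ℝ) (a : X) (t : ℝ) :
    Λ (a, t) = Λ (a, 0) + t * Λ (0, 1) := by
  have h : (a, t) = (a, (0:ℝ)) + t • ((0:X), (1:ℝ)) := by
    simp [Prod.ext_iff]
  rw [h, map_add, map_smul, smul_eq_mul]

lemma epi_closed (φ : X → EReal) (hlsc : LowerSemicontinuous φ) :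
    IsClosed {p : X × ℝ | φ p.1 ≤ (p.2 : EReal)} := by
  rw [← isOpen_compl_iff]
  rw [isOpen_iff_mem_nhds]
  rintro ⟨a, b⟩ hab
  simp only [mem_compl_iff, mem_setOf_eq, not_le] at hab
  obtain ⟨q, hq1, hq2⟩ := EReal.exists_between_coe_real hab
  have h1 : ∀ᶠ z in 𝓝 a, (q : EReal) < φ z := hlsc a _ hq2
  have h2 : ∀ᶠ s in 𝓝 b, s < q := eventually_lt_nhds (by exact_mod_cast hq1)
  have := (h1.prod_nhds h2)
  filter_upwards [this] with p hp
  simp only [mem_compl_iff, mem_setOf_eq, not_le]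
  exact lt_trans (by exact_mod_cast hp.2) hp.1

lemma epi_convex (φ : X → EReal) (hconv : ERealConvexOn φ) (hbot : ∀ x, φ x ≠ ⊥) :
    Convex ℝ {p : X × ℝ | φ p.1 ≤ (p.2 : EReal)} := by
  rintro ⟨a, s⟩ ha ⟨b, t⟩ hb u v hu hv huv
  simp only [mem_setOf_eq] at *
  calc φ (u • a + v • b) ≤ (u:EReal) * φ a + (v:EReal) * φ b := by
        have := hconv a b u v hu hv huv
        simpa using this
    _ ≤ (u:EReal) * s + (v:EReal) * t := by
        gcongr <;> first
          | exact EReal.coe_nonneg.2 hu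
          | exact EReal.coe_nonneg.2 hv
          | assumption
    _ = ((u * s + v * t : ℝ) : EReal) := by
        rw [← EReal.coe_mul, ← EReal.coe_mul, ← EReal.coe_add]

lemma affine_minorant (φ : X → EReal) (hproper : ProperFn φ)
    (hconv : ERealConvexOn φ) (hlsc : LowerSemicontinuous φ) :
    ∃ (w : X →L[ℝ] ℝ) (c : ℝ), ∀ x, ((w x + c : ℝ) : EReal) ≤ φ x := by
  obtain ⟨hbot, x0, hx0⟩ := hproper
  set r0 : ℝ := (φ x0).toReal with hr0
  have hφx0 : φ x0 = (r0 : EReal) := (EReal.coe_toReal hx0 (hbot x0)).symm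
  set Epi : Set (X × ℝ) := {p : X × ℝ | φ p.1 ≤ (p.2 : EReal)} with hEpi
  have hnot : ((x0, r0 - 1) : X × ℝ) ∉ Epi := by
    simp only [hEpi, mem_setOf_eq, hφx0]
    exact_mod_cast by linarith
  obtain ⟨Λ, u, hΛ1, hΛ2⟩ := geometric_hahn_banach_point_closed
    (epi_convex φ hconv hbot) (epi_closed φ hlsc) hnot
  set c0 : ℝ := Λ (0, 1) with hc0
  -- from (x0, r0) ∈ Epi and (x0, r0+t) ∈ Epi
  have hmem : ∀ t : ℝ, 0 ≤ t → ((x0, r0 + t) : X × ℝ) ∈ Epi := by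
    intro t ht
    simp only [hEpi, mem_setOf_eq, hφx0]
    exact_mod_cast by linarith
  have key : ∀ t : ℝ, 0 ≤ t → u < Λ (x0, 0) + (r0 + t) * c0 := by
    intro t ht
    have := hΛ2 _ (hmem t ht)
    rwa [prod_clm_eq] at this
  have hΛ1' : Λ (x0, 0) + (r0 - 1) * c0 < u := by
    have := hΛ1; rwa [prod_clm_eq] at this
  have hc0pos : 0 < c0 := by
    have h0 := key 0 le_rfl
    nlinarith [key 0 le_rfl, hΛ1']
  refine ⟨(-(1/c0)) • (Λ.comp (ContinuousLinearMap.inl ℝ X ℝ)), u / c0, ?_⟩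
  intro x
  rcases eq_or_ne (φ x) ⊤ with h | h
  · simp [h]
  set rx : ℝ := (φ x).toReal with hrx
  have hφx : φ x = (rx : EReal) := (EReal.coe_toReal h (hbot x)).symm
  have hmemx : ((x, rx) : X × ℝ) ∈ Epi := by
    simp only [hEpi, mem_setOf_eq, hφx]; exact le_refl _
  have := hΛ2 _ hmemx
  rw [prod_clm_eq] at this
  rw [hφx]
  have hΛx : Λ.comp (ContinuousLinearMap.inl ℝ X ℝ) x = Λ (x, 0) := rfl
  simp only [ContinuousLinearMap.smul_apply, hΛx, smul_eq_mul]
  apply EReal.coe_le_coe_iff.2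
  have key2 : u ≤ Λ (x, 0) + rx * c0 := le_of_lt (by rw [hc0]; exact this)
  have h3 : u / c0 ≤ (Λ (x, 0) + rx * c0) / c0 := (div_le_div_iff_of_pos_right hc0pos).2 key2
  have h4 : (Λ (x, 0) + rx * c0) / c0 = Λ (x, 0) / c0 + rx := by field_simp
  have h5 : -(1 / c0) * Λ (x, 0) = -(Λ (x, 0) / c0) := by field_simp
  linarith

lemma ekeland_weak [CompleteSpace X] (F : X → EReal) (hlsc : LowerSemicontinuous F)
    (m : ℝ) (hm : ∀ x, (m : EReal) ≤ F x) (x0 : X) (h0 : F x0 ≠ ⊤)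
    (δ : ℝ) (hδ : 0 < δ) :
    ∃ xe : X, F xe ≠ ⊤ ∧ ∀ y, F xe ≤ F y + ((δ * ‖y - xe‖ : ℝ) : EReal) := by
  have hbot : ∀ x, F x ≠ ⊥ := fun x h => by simpa [h] using hm x
  set val : X → ℝ := fun x => (F x).toReal with hval
  have hcoe : ∀ x, F x ≠ ⊤ → F x = ((val x : ℝ) : EReal) :=
    fun x hx => (EReal.coe_toReal hx (hbot x)).symm
  set S : X → Set X := fun x => {y | F y + ((δ * ‖x - y‖ : ℝ) : EReal) ≤ F x} with hS
  have hmemself : ∀ x, x ∈ S x := by intro x; simp [hS]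
  have htrans : ∀ x y w, y ∈ S x → w ∈ S y → w ∈ S x := by
    intro x y w hy hw
    simp only [hS, mem_setOf_eq] at *
    calc F w + ((δ * ‖x - w‖ : ℝ) : EReal)
        ≤ F w + ((δ * ‖y - w‖ + δ * ‖x - y‖ : ℝ) : EReal) := by
          apply add_le_add_right
          apply EReal.coe_le_coe_iff.2
          have := norm_sub_le_norm_sub_add_norm_sub x y w
          nlinarith
      _ = (F w + ((δ * ‖y - w‖ : ℝ) : EReal)) + ((δ * ‖x - y‖ : ℝ) : EReal) := by
          rw [EReal.coe_add, add_assoc]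
      _ ≤ F y + ((δ * ‖x - y‖ : ℝ) : EReal) := add_le_add_left hw _
      _ ≤ F x := hy
  have hclosed : ∀ x, IsClosed (S x) := by
    intro x
    have h := lsc_coe_add (fun y => δ * ‖x - y‖) (by fun_prop) F hlsc
    have h2 := lowerSemicontinuous_iff_isOpen_preimage.1 h (F x)
    have : S x = ((fun y => ((δ * ‖x - y‖ : ℝ) : EReal) + F y) ⁻¹' Ioi (F x))ᶜ := by
      ext y; simp [hS, mem_setOf_eq, not_lt, add_comm]
    rw [this]
    exact (by simpa [add_comm] using h2 : IsOpen _).isClosed_compl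
  have hfin : ∀ x y, F x ≠ ⊤ → y ∈ S x → F y ≠ ⊤ ∧ val y + δ * ‖x - y‖ ≤ val x := by
    intro x y hx hy
    simp only [hS, mem_setOf_eq] at hy
    have h1 : F y ≤ F x := by
      refine le_trans ?_ hy
      nth_rewrite 1 [← add_zero (F y)]
      apply add_le_add_right
      exact_mod_cast mul_nonneg hδ.le (norm_nonneg _)
    have hyt : F y ≠ ⊤ := fun h => hx (top_le_iff.1 (h ▸ h1))
    refine ⟨hyt, ?_⟩
    rw [hcoe x hx, hcoe y hyt, ← EReal.coe_add] at hy
    exact_mod_cast hy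
  -- the infimum over S x
  set i : X → EReal := fun x => ⨅ y ∈ S x, F y with hi
  have hi_lb : ∀ x, (m : EReal) ≤ i x := fun x => le_iInf₂ fun y _ => hm y
  have hi_ub : ∀ x, i x ≤ F x := fun x => iInf₂_le x (hmemself x)
  have hstep : ∀ x : X, F x ≠ ⊤ → ∀ c : ℝ, 0 < c →
      ∃ y, y ∈ S x ∧ F y ≤ i x + (c : EReal) := by
    intro x hx c hc
    have hitop : i x ≠ ⊤ := fun h => hx (top_le_iff.1 (h ▸ hi_ub x))
    have hibot : i x ≠ ⊥ := fun h => by simpa [h] using hi_lb x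
    have hlt : i x < i x + (c : EReal) := by
      rw [(EReal.coe_toReal hitop hibot).symm, ← EReal.coe_add]
      exact_mod_cast by linarith
    obtain ⟨y, hy⟩ := iInf_lt_iff.1 hlt
    obtain ⟨hyS, hylt⟩ := iInf_lt_iff.1 hy
    exact ⟨y, hyS, hylt.le⟩
  choose! next hnext1 hnext2 using hstep
  set u : ℕ → X := fun n => Nat.rec x0 (fun k xk => next xk ((1/2 : ℝ)^k)) n with hu
  have husucc : ∀ n, u (n+1) = next (u n) ((1/2 : ℝ)^n) := fun n => rfl
  have hpow : ∀ n : ℕ, (0:ℝ) < (1/2 : ℝ)^n := fun n => by positivity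
  have hinv : ∀ n, F (u n) ≠ ⊤ := by
    intro n
    induction n with
    | zero => exact h0
    | succ k ih =>
      rw [husucc]
      intro h
      have h2 := hnext2 (u k) ih ((1/2:ℝ)^k) (hpow k)
      rw [h] at h2
      have hitop : i (u k) ≠ ⊤ := fun hh => ih (top_le_iff.1 (hh ▸ hi_ub (u k)))
      have hibot : i (u k) ≠ ⊥ := fun hh => by simpa [hh] using hi_lb (u k)
      rw [(EReal.coe_toReal hitop hibot).symm, ← EReal.coe_add] at h2
      exact (EReal.coe_ne_top _) (top_le_iff.1 h2)
  have hchain : ∀ n, u (n+1) ∈ S (u n) := by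
    intro n; rw [husucc]; exact hnext1 (u n) (hinv n) _ (hpow n)
  have hchain2 : ∀ n mm, n ≤ mm → u mm ∈ S (u n) := by
    intro n mm h
    obtain ⟨k, rfl⟩ := Nat.exists_eq_add_of_le h
    clear h
    induction k with
    | zero => exact hmemself _
    | succ j ih => exact htrans _ _ _ ih (hchain (n + j))
  set r : ℕ → ℝ := fun n => val (u n) with hrdef
  have hr : ∀ n mm, n ≤ mm → r mm + δ * ‖u n - u mm‖ ≤ r n :=
    fun n mm h => (hfin _ _ (hinv n) (hchain2 n mm h)).2
  have hrant : Antitone r := by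
    intro n mm h
    have := hr n mm h
    nlinarith [norm_nonneg (u n - u mm), hδ]
  have hrlb : ∀ n, m ≤ r n := by
    intro n
    have := hm (u n)
    rw [hcoe _ (hinv n)] at this
    exact_mod_cast this
  set L : ℝ := ⨅ n, r n with hL
  have hbdd : BddBelow (range r) := ⟨m, by rintro _ ⟨n, rfl⟩; exact hrlb n⟩
  have hrL : Tendsto r atTop (𝓝 L) := tendsto_atTop_ciInf hrant hbdd
  have hLle : ∀ n, L ≤ r n := fun n => ciInf_le hbdd n
  have hcauchy : CauchySeq u := by
    apply cauchySeq_of_le_tendsto_0 (fun N => (r N - L) / δ)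
    · intro n mm N hn hmm
      rcases le_total n mm with h | h
      · have := hr n mm h
        rw [dist_eq_norm]
        rw [le_div_iff₀ hδ]
        nlinarith [hrant hn, hLle mm]
      · have := hr mm n h
        rw [dist_comm, dist_eq_norm]
        rw [le_div_iff₀ hδ]
        nlinarith [hrant hmm, hLle n]
    · have : Tendsto (fun N => (r N - L) / δ) atTop (𝓝 ((L - L) / δ)) :=
        ((hrL.sub_const L).div_const δ)
      simpa using this
  obtain ⟨xe, hxe⟩ := cauchySeq_tendsto_of_complete hcauchy
  have hxeS : ∀ n, xe ∈ S (u n) := fun n =>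
    (hclosed (u n)).mem_of_tendsto hxe (eventually_atTop.2 ⟨n, fun mm h => hchain2 n mm h⟩)
  have hFxeL : F xe ≤ (L : EReal) := by
    by_contra h
    push_neg at h
    obtain ⟨c, hc1, hc2⟩ := EReal.exists_between_coe_real h
    have h2 : ∀ᶠ nn in atTop, (c : EReal) < F (u nn) := hxe.eventually (hlsc xe _ hc2)
    have h3 : ∀ᶠ nn in atTop, c ≤ r nn := by
      filter_upwards [h2] with nn hnn
      rw [hcoe _ (hinv nn)] at hnn
      exact_mod_cast hnn.le
    have := ge_of_tendsto hrL h3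
    exact absurd (EReal.coe_lt_coe_iff.1 hc1) (not_lt.2 this)
  have hxetop : F xe ≠ ⊤ := fun h => by simp [h] at hFxeL
  refine ⟨xe, hxetop, ?_⟩
  intro y
  by_contra hlt
  push_neg at hlt
  have hFy_ne_top : F y ≠ ⊤ := by
    intro h
    rw [h, EReal.top_add_coe] at hlt
    exact absurd hlt (not_lt.2 le_top)
  have hySxe : y ∈ S xe := by
    simp only [hS, mem_setOf_eq]
    rw [norm_sub_rev]
    exact hlt.le
  have hyS : ∀ n, y ∈ S (u n) := fun n => htrans _ _ _ (hxeS n) hySxe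
  have hry : ∀ n, r (n+1) ≤ val y + (1/2:ℝ)^n := by
    intro n
    have h1 : i (u n) ≤ F y := iInf₂_le y (hyS n)
    have h2 : F (u (n+1)) ≤ i (u n) + (((1/2:ℝ)^n : ℝ) : EReal) := by
      rw [husucc]; exact hnext2 (u n) (hinv n) _ (hpow n)
    have h3 : F (u (n+1)) ≤ F y + (((1/2:ℝ)^n : ℝ) : EReal) :=
      h2.trans (add_le_add_left h1 _)
    rw [hcoe _ (hinv (n+1)), hcoe _ hFy_ne_top, ← EReal.coe_add] at h3
    exact_mod_cast h3
  have hL_le_ry : L ≤ val y := by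
    have h4 : Tendsto (fun n : ℕ => val y + (1/2:ℝ)^n) atTop (𝓝 (val y)) := by
      have := tendsto_pow_atTop_nhds_zero_of_lt_one (by norm_num : (0:ℝ) ≤ 1/2) (by norm_num)
      simpa using (tendsto_const_nhds (x := val y) (f := atTop)).add this
    exact le_of_tendsto_of_tendsto' (hrL.comp (tendsto_add_atTop_nat 1)) h4 hry
  have h5 : F xe ≤ F y := by
    rw [hcoe y hFy_ne_top]
    exact hFxeL.trans (EReal.coe_le_coe_iff.2 hL_le_ry)
  have h6 : F y + ((δ * ‖y - xe‖ : ℝ) : EReal) < F y := hlt.trans_le h5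
  rw [hcoe y hFy_ne_top, ← EReal.coe_add] at h6
  have := EReal.coe_lt_coe_iff.1 h6
  nlinarith [norm_nonneg (y - xe), hδ]

lemma real_le_of_forall_pos (a b : ℝ) (h : ∀ ε : ℝ, 0 < ε → a < b + ε) : a ≤ b := by
  by_contra hc
  push_neg at hc
  have := h ((a - b)/2) (by linarith)
  linarith

lemma sum_rule (f : X → ℝ) (hf_cont : Continuous f)
    (hf_conv : ∀ p q : X, ∀ a b : ℝ, 0 ≤ a → 0 ≤ b → a + b = 1 →
      f (a • p + b • q) ≤ a * f p + b * f q)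
    (g : X → EReal) (hg_conv : ERealConvexOn g) (hg_bot : ∀ y, g y ≠ ⊥)
    (x : X) (hgx_top : g x ≠ ⊤)
    (hmin : ∀ y, ((f x : ℝ) : EReal) + g x ≤ ((f y : ℝ) : EReal) + g y) :
    ∃ w : X →L[ℝ] ℝ, (∀ y, f x + w (y - x) ≤ f y) ∧
      (∀ y, (((-w) (y - x) : ℝ) : EReal) + g x ≤ g y) := by
  set gx : ℝ := (g x).toReal with hgxdef
  have hgx : g x = (gx : EReal) := (EReal.coe_toReal hgx_top (hg_bot x)).symm
  -- finite values inside B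
  have hfinite : ∀ (p1 : X) (p2 : ℝ), (p2 : EReal) + g p1 ≤ g x →
      g p1 = (((g p1).toReal : ℝ) : EReal) ∧ p2 + (g p1).toReal ≤ gx := by
    intro p1 p2 hp
    have htop : g p1 ≠ ⊤ := by
      intro h
      rw [h] at hp
      rw [EReal.coe_add_top] at hp
      exact absurd hp (by simp [hgx])
    have hco : g p1 = (((g p1).toReal : ℝ) : EReal) := (EReal.coe_toReal htop (hg_bot p1)).symm
    refine ⟨hco, ?_⟩
    rw [hco, hgx, ← EReal.coe_add] at hp
    exact_mod_cast hp
  set A : Set (X × ℝ) := {p | f p.1 - f x < p.2} with hA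
  set B : Set (X × ℝ) := {p | (p.2 : EReal) + g p.1 ≤ g x} with hB
  have hAopen : IsOpen A :=
    isOpen_lt (((hf_cont.comp continuous_fst)).sub continuous_const) continuous_snd
  have hAconv : Convex ℝ A := by
    rintro ⟨p1, p2⟩ hp ⟨q1, q2⟩ hq a b ha hb hab
    simp only [hA, mem_setOf_eq, Prod.smul_mk, Prod.mk_add_mk, smul_eq_mul] at *
    have hc := hf_conv p1 q1 a b ha hb hab
    rcases eq_or_lt_of_le ha with h | ha'
    · have hb1 : b = 1 := by linarith
      simp only [← h, hb1, zero_smul, one_smul, zero_add, zero_mul, one_mul] at *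
      linarith
    · nlinarith [mul_lt_mul_of_pos_left hp ha', mul_le_mul_of_nonneg_left hq.le hb,
        show a * f x + b * f x = f x by rw [← add_mul, hab, one_mul]]
  have hBconv : Convex ℝ B := by
    rintro ⟨p1, p2⟩ hp ⟨q1, q2⟩ hq a b ha hb hab
    simp only [hB, mem_setOf_eq, Prod.smul_mk, Prod.mk_add_mk, smul_eq_mul] at *
    obtain ⟨hcp, hip⟩ := hfinite p1 p2 hp
    obtain ⟨hcq, hiq⟩ := hfinite q1 q2 hq
    have hgc := hg_conv p1 q1 a b ha hb hab
    rw [hcp, hcq] at hgc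
    have hgc2 : g (a • p1 + b • q1) ≤ ((a * (g p1).toReal + b * (g q1).toReal : ℝ) : EReal) := by
      refine hgc.trans_eq ?_
      rw [← EReal.coe_mul, ← EReal.coe_mul, ← EReal.coe_add]
    calc ((a * p2 + b * q2 : ℝ) : EReal) + g (a • p1 + b • q1)
        ≤ ((a * p2 + b * q2 : ℝ) : EReal) +
            ((a * (g p1).toReal + b * (g q1).toReal : ℝ) : EReal) := add_le_add_right hgc2 _
      _ = ((a * p2 + b * q2 + (a * (g p1).toReal + b * (g q1).toReal) : ℝ) : EReal) := by
          rw [← EReal.coe_add]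
      _ ≤ (gx : EReal) := by
          apply EReal.coe_le_coe_iff.2
          nlinarith [mul_le_mul_of_nonneg_left hip ha, mul_le_mul_of_nonneg_left hiq hb,
            show a * gx + b * gx = gx by rw [← add_mul, hab, one_mul]]
      _ = g x := hgx.symm
  have hdisj : Disjoint A B := by
    rw [disjoint_left]
    rintro ⟨p1, p2⟩ hp hq
    simp only [hA, hB, mem_setOf_eq] at hp hq
    obtain ⟨hcp, hip⟩ := hfinite p1 p2 hq
    have := hmin p1
    rw [hgx, hcp, ← EReal.coe_add, ← EReal.coe_add] at this
    have h2 : f x + gx ≤ f p1 + (g p1).toReal := by exact_mod_cast this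
    linarith
  obtain ⟨Λ, s, hΛ1, hΛ2⟩ := geometric_hahn_banach_open hAconv hAopen hBconv hdisj
  set c0 : ℝ := Λ (0, 1) with hc0
  have hxB : ((x, (0:ℝ)) : X × ℝ) ∈ B := by
    simp only [hB, mem_setOf_eq, EReal.coe_zero, zero_add]
    exact le_refl _
  have hsx : s ≤ Λ (x, 0) := hΛ2 _ hxB
  have hxA : ∀ t : ℝ, 0 < t → ((x, t) : X × ℝ) ∈ A := by
    intro t ht; simp only [hA, mem_setOf_eq]; linarith
  have hA_ineq : ∀ t : ℝ, 0 < t → Λ (x, 0) + t * c0 < s := by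
    intro t ht
    have := hΛ1 _ (hxA t ht)
    rwa [prod_clm_eq] at this
  have hc0neg : c0 < 0 := by
    have := hA_ineq 1 one_pos
    nlinarith
  have hkpos : (0:ℝ) < -c0 := by linarith
  have hne : (-c0 : ℝ) ≠ 0 := ne_of_gt hkpos
  set w : X →L[ℝ] ℝ := (-c0)⁻¹ • (Λ.comp (ContinuousLinearMap.inl ℝ X ℝ)) with hw
  have hwapp : ∀ y : X, w (y - x) = (-c0)⁻¹ * (Λ (y, 0) - Λ (x, 0)) := by
    intro y
    simp only [hw, ContinuousLinearMap.smul_apply, smul_eq_mul]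
    congr 1
    rw [show (y - x : X) = y - x from rfl, map_sub]
    rfl
  -- also: w0 x ≤ s
  have hw0x : Λ (x, 0) ≤ s := by
    apply real_le_of_forall_pos
    intro ε hε
    have := hA_ineq (ε / (-c0)) (by positivity)
    have hx2 : (ε / (-c0)) * (-c0) = ε := div_mul_cancel₀ ε hne
    nlinarith
  refine ⟨w, ?_, ?_⟩
  · intro y
    have key : ∀ τ : ℝ, 0 < τ → Λ (y, 0) - Λ (x, 0) < (-c0) * (f y - f x) + (-c0) * τ := by
      intro τ hτ
      have hyA : ((y, f y - f x + τ) : X × ℝ) ∈ A := by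
        simp only [hA, mem_setOf_eq]; linarith
      have := hΛ1 _ hyA
      rw [prod_clm_eq] at this
      nlinarith [hsx]
    have key2 : Λ (y, 0) - Λ (x, 0) ≤ (-c0) * (f y - f x) := by
      apply real_le_of_forall_pos
      intro ε hε
      have h9 := key (ε / (-c0)) (by positivity)
      have hkk : (-c0) * (ε / (-c0)) = ε := by rw [mul_comm]; exact div_mul_cancel₀ ε hne
      linarith
    have h7 : w (y - x) ≤ f y - f x := by
      rw [hwapp y]
      calc (-c0)⁻¹ * (Λ (y, 0) - Λ (x, 0)) ≤ (-c0)⁻¹ * ((-c0) * (f y - f x)) :=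
            mul_le_mul_of_nonneg_left key2 (by positivity)
        _ = f y - f x := inv_mul_cancel_left₀ hne _
    linarith
  · intro y
    rcases eq_or_ne (g y) ⊤ with h | h
    · rw [h]; exact le_top
    have hcy : g y = (((g y).toReal : ℝ) : EReal) := (EReal.coe_toReal h (hg_bot y)).symm
    set gy : ℝ := (g y).toReal with hgydef
    have hyB : ((y, gx - gy) : X × ℝ) ∈ B := by
      simp only [hB, mem_setOf_eq]
      rw [hcy, ← EReal.coe_add, hgx]
      exact_mod_cast by linarith
    have hsy := hΛ2 _ hyB
    rw [prod_clm_eq] at hsy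
    -- s ≤ Λ(y,0) + (gx - gy) * c0 ; Λ(x,0) ≤ s
    have h1 : (-c0) * (gx - gy) ≤ Λ (y, 0) - Λ (x, 0) := by nlinarith [hw0x, hsy]
    have h2 : gx - gy ≤ w (y - x) := by
      rw [hwapp y]
      calc gx - gy = (-c0)⁻¹ * ((-c0) * (gx - gy)) := (inv_mul_cancel_left₀ hne _).symm
        _ ≤ (-c0)⁻¹ * (Λ (y, 0) - Λ (x, 0)) := mul_le_mul_of_nonneg_left h1 (by positivity)
    rw [hcy, hgx, ← EReal.coe_add]
    apply EReal.coe_le_coe_iff.2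
    simp only [ContinuousLinearMap.neg_apply]
    linarith

lemma norm_bound_of_subgrad (δ : ℝ) (hδ : 0 ≤ δ) (r : X →L[ℝ] ℝ)
    (h : ∀ d : X, r d ≤ δ * ‖d‖) : ‖r‖ ≤ δ := by
  apply ContinuousLinearMap.opNorm_le_bound r hδ
  intro d
  rw [Real.norm_eq_abs, abs_le]
  constructor
  · have := h (-d); rw [map_neg, norm_neg] at this; linarith
  · exact h d

lemma duality_of_subgrad (c : ℝ) (hc : 0 < c) (wv : X) (v : X →L[ℝ] ℝ)
    (h : ∀ u : X, c * ‖wv‖^2 + v (u - wv) ≤ c * ‖u‖^2) :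
    v wv = 2*c*‖wv‖^2 ∧ ‖v‖ ≤ 2*c*‖wv‖ := by
  have hub : ∀ d : X, v d ≤ 2*c*‖wv‖*‖d‖ := by
    intro d
    apply real_le_of_forall_pos
    intro ε hε
    set t : ℝ := ε / (c * (‖d‖^2 + 1)) with ht
    have htpos : 0 < t := by positivity
    have h1 := h (wv + t • d)
    rw [add_sub_cancel_left, map_smul, smul_eq_mul] at h1
    have h2 : ‖wv + t • d‖ ≤ ‖wv‖ + t * ‖d‖ := by
      refine (norm_add_le _ _).trans ?_
      rw [norm_smul, Real.norm_eq_abs, abs_of_pos htpos]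
    have h3 : c * ‖wv + t • d‖^2 ≤ c * (‖wv‖ + t * ‖d‖)^2 :=
      mul_le_mul_of_nonneg_left (pow_le_pow_left₀ (norm_nonneg _) h2 2) hc.le
    have h4 : t * v d ≤ 2*c*t*‖wv‖*‖d‖ + c * t^2 * ‖d‖^2 := by nlinarith
    have h5 : v d ≤ 2*c*‖wv‖*‖d‖ + c * t * ‖d‖^2 := by
      have := (mul_le_mul_iff_right₀ htpos).1 (by nlinarith : t * v d ≤ t * (2*c*‖wv‖*‖d‖ + c * t * ‖d‖^2))
      linarith
    have h6 : c * t * ‖d‖^2 < ε := by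
      have hlt : c * (‖d‖^2 + 1) * t = ε := by
        rw [ht, mul_comm]
        exact div_mul_cancel₀ ε (by positivity)
      nlinarith
    linarith
  have hlb : 2*c*‖wv‖^2 ≤ v wv := by
    apply real_le_of_forall_pos
    intro ε hε
    set t : ℝ := ε / (c * (‖wv‖^2 + 1)) with ht
    have htpos : 0 < t := by positivity
    have h1 := h (wv - t • wv)
    have heq : (wv - t • wv) - wv = (-t) • wv := by
      rw [neg_smul]; abel
    rw [heq, map_smul, smul_eq_mul] at h1
    have h2 : ‖wv - t • wv‖^2 = (1-t)^2 * ‖wv‖^2 := by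
      have : wv - t • wv = (1 - t) • wv := by rw [sub_smul, one_smul]
      rw [this, norm_smul, Real.norm_eq_abs, mul_pow, sq_abs]
    rw [h2] at h1
    have h4 : 2*c*‖wv‖^2 - c * t * ‖wv‖^2 ≤ v wv := by
      have h5 : t * (2*c*‖wv‖^2 - c*t*‖wv‖^2) ≤ t * v wv := by nlinarith
      have := (mul_le_mul_iff_right₀ htpos).1 h5
      linarith
    have h6 : c * t * ‖wv‖^2 < ε := by
      have hlt : c * (‖wv‖^2 + 1) * t = ε := by
        rw [ht, mul_comm]
        exact div_mul_cancel₀ ε (by positivity)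
      nlinarith
    linarith
  have hub2 : v wv ≤ 2*c*‖wv‖^2 := by
    have := hub wv
    nlinarith [norm_nonneg wv]
  exact ⟨le_antisymm hub2 hlb, norm_bound_of_subgrad _ (by positivity) v hub⟩


/-- approximate stationarity from Ekeland's principle:
`λz* - λx*_ε = y*_ε + ε u*_ε` with `y*_ε ∈ J(x_ε - z)`, `x*_ε ∈ ∂φ(x_ε)`, `‖u*_ε‖ ≤ 1`. -/
theorem ekeland_approx (φ : X → EReal) (hproper : ProperFn φ)
    (hconv : ERealConvexOn φ) (hlsc : LowerSemicontinuous φ)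
    (z : X) (z' : X →L[ℝ] ℝ) (lam : ℝ) (hlam : 0 < lam) :
    ∀ ε : ℝ, 0 < ε →
      ∃ (xe : X) (u' y' x' : X →L[ℝ] ℝ),
        ‖u'‖ ≤ 1 ∧ y' ∈ dualityMap (xe - z) ∧ (xe, x') ∈ subdiff φ ∧
          lam • z' - lam • x' = y' + ε • u' := by
  intro ε hε
  obtain ⟨wm, cm, hmin_aff⟩ := affine_minorant φ hproper hconv hlsc
  have hbot : ∀ x, φ x ≠ ⊥ := hproper.1
  obtain ⟨x0, hx0top⟩ := hproper.2
  set cc : ℝ := 1 / (2 * lam) with hccdef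
  have hcc : 0 < cc := by positivity
  have hccl : lam * (2 * cc) = 1 := by rw [hccdef]; field_simp
  set f : X → ℝ := fun y => cc * ‖y - z‖ ^ 2 - z' y with hfdef
  have hf_cont : Continuous f := by
    apply Continuous.sub
    · exact continuous_const.mul (((continuous_id.sub continuous_const).norm).pow 2)
    · exact z'.continuous
  set F : X → EReal := fun y => ((f y : ℝ) : EReal) + φ y with hFdef
  have hFlsc : LowerSemicontinuous F := lsc_coe_add f hf_cont φ hlsc
  -- lower bound
  set M : ℝ := ‖z'‖ + ‖wm‖ with hM
  have hM0 : 0 ≤ M := by positivity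
  set m : ℝ := cm - M * ‖z‖ - lam / 2 * M ^ 2 with hm
  have hkey : ∀ t : ℝ, 0 ≤ cc * t ^ 2 - M * t + lam / 2 * M ^ 2 := by
    intro t
    have h1 : (0:ℝ) ≤ (t - lam * M) ^ 2 / (2 * lam) := by positivity
    have h2 : (t - lam * M) ^ 2 / (2 * lam) = cc * t ^ 2 - M * t + lam / 2 * M ^ 2 := by
      rw [hccdef]; field_simp; ring
    linarith
  have hmlb : ∀ y, (m : EReal) ≤ F y := by
    intro y
    have hreal : m ≤ f y + (wm y + cm) := by
      have h1 : z' y ≤ ‖z'‖ * ‖y‖ :=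
        le_trans (le_abs_self _) (by rw [← Real.norm_eq_abs]; exact z'.le_opNorm y)
      have h2 : -(‖wm‖ * ‖y‖) ≤ wm y := by
        have := wm.le_opNorm y
        rw [Real.norm_eq_abs] at this
        have := abs_le.1 this
        linarith [this.1]
      have h3 : ‖y‖ ≤ ‖y - z‖ + ‖z‖ := by
        have : y = (y - z) + z := by abel
        nth_rewrite 1 [this]
        exact norm_add_le _ _
      have h4 := hkey ‖y - z‖
      have h5 : M * ‖y‖ ≤ M * (‖y - z‖ + ‖z‖) := mul_le_mul_of_nonneg_left h3 hM0
      simp only [hfdef, hm, hM] at *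
      nlinarith
    calc (m : EReal) ≤ ((f y + (wm y + cm) : ℝ) : EReal) := EReal.coe_le_coe_iff.2 hreal
      _ = ((f y : ℝ) : EReal) + ((wm y + cm : ℝ) : EReal) := by rw [EReal.coe_add]
      _ ≤ ((f y : ℝ) : EReal) + φ y := add_le_add_right (hmin_aff y) _
  have hF0 : F x0 ≠ ⊤ := by
    intro h
    simp only [hFdef] at h
    rcases eq_or_ne (φ x0) ⊤ with h2 | h2
    · exact hx0top h2
    · rw [(EReal.coe_toReal h2 (hbot x0)).symm, ← EReal.coe_add] at h
      exact EReal.coe_ne_top _ h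
  set δ : ℝ := ε / lam with hδdef
  have hδ : 0 < δ := by positivity
  obtain ⟨xe, hxetop, hEk⟩ := ekeland_weak F hFlsc m hmlb x0 hF0 δ hδ
  have hφxe : φ xe ≠ ⊤ := by
    intro h
    apply hxetop
    simp only [hFdef, h, EReal.coe_add_top]
  -- convexity helpers
  have hconv_norm : ∀ (q p1 p2 : X) (a b : ℝ), 0 ≤ a → 0 ≤ b → a + b = 1 →
      ‖(a • p1 + b • p2) - q‖ ≤ a * ‖p1 - q‖ + b * ‖p2 - q‖ := by
    intro q p1 p2 a b ha hb hab
    have hq : a • q + b • q = q := by rw [← add_smul, hab, one_smul]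
    have heq : (a • p1 + b • p2) - q = a • (p1 - q) + b • (p2 - q) := by
      conv_lhs => rw [← hq]
      rw [smul_sub, smul_sub]
      abel
    rw [heq]
    refine (norm_add_le _ _).trans ?_
    rw [norm_smul, norm_smul, Real.norm_eq_abs, Real.norm_eq_abs,
      abs_of_nonneg ha, abs_of_nonneg hb]
  have hconv_sq : ∀ (q p1 p2 : X) (a b : ℝ), 0 ≤ a → 0 ≤ b → a + b = 1 →
      cc * ‖(a • p1 + b • p2) - q‖ ^ 2 ≤ a * (cc * ‖p1 - q‖ ^ 2) + b * (cc * ‖p2 - q‖ ^ 2) := by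
    intro q p1 p2 a b ha hb hab
    have h1 := hconv_norm q p1 p2 a b ha hb hab
    have h2 : ‖(a • p1 + b • p2) - q‖ ^ 2 ≤ (a * ‖p1 - q‖ + b * ‖p2 - q‖) ^ 2 :=
      pow_le_pow_left₀ (norm_nonneg _) h1 2
    have h3 : (a * ‖p1 - q‖ + b * ‖p2 - q‖) ^ 2 ≤ a * ‖p1 - q‖ ^ 2 + b * ‖p2 - q‖ ^ 2 := by
      nlinarith [sq_nonneg (‖p1 - q‖ - ‖p2 - q‖), mul_nonneg ha hb]
    nlinarith
  -- first sum rule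
  set fplus : X → ℝ := fun y => f y + δ * ‖y - xe‖ with hfpdef
  have hfp_cont : Continuous fplus :=
    hf_cont.add (continuous_const.mul ((continuous_id.sub continuous_const).norm))
  have hfp_conv : ∀ p q : X, ∀ a b : ℝ, 0 ≤ a → 0 ≤ b → a + b = 1 →
      fplus (a • p + b • q) ≤ a * fplus p + b * fplus q := by
    intro p q a b ha hb hab
    simp only [hfpdef, hfdef]
    have h1 := hconv_sq z p q a b ha hb hab
    have h2 := hconv_norm xe p q a b ha hb hab
    have h3 : δ * ‖(a • p + b • q) - xe‖ ≤ δ * (a * ‖p - xe‖ + b * ‖q - xe‖) :=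
      mul_le_mul_of_nonneg_left h2 hδ.le
    have h4 : z' (a • p + b • q) = a * z' p + b * z' q := by
      rw [map_add, map_smul, map_smul]; rfl
    nlinarith
  have hfpxe : fplus xe = f xe := by
    simp only [hfpdef, sub_self, norm_zero, mul_zero, add_zero]
  have hmin1 : ∀ y, ((fplus xe : ℝ) : EReal) + φ xe ≤ ((fplus y : ℝ) : EReal) + φ y := by
    intro y
    have := hEk y
    simp only [hFdef] at this
    rw [hfpxe]
    calc ((f xe : ℝ) : EReal) + φ xe ≤ (((f y : ℝ)) : EReal) + φ y + ((δ * ‖y - xe‖ : ℝ) : EReal) :=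
          this
      _ = ((f y : ℝ) : EReal) + ((δ * ‖y - xe‖ : ℝ) : EReal) + φ y := by
          rw [add_right_comm]
      _ = ((fplus y : ℝ) : EReal) + φ y := by rw [← EReal.coe_add]
  obtain ⟨w, hw1, hw2⟩ := sum_rule fplus hfp_cont hfp_conv φ hconv hbot xe hφxe hmin1
  -- second sum rule
  have hs : ∀ y, cc * ‖xe - z‖ ^ 2 + (w + z') (y - xe) ≤ cc * ‖y - z‖ ^ 2 + δ * ‖y - xe‖ := by
    intro y
    have h1 := hw1 y
    simp only [hfpdef, hfdef, sub_self, norm_zero, mul_zero, add_zero] at h1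
    have h2 : (w + z') (y - xe) = w (y - xe) + (z' y - z' xe) := by
      simp only [ContinuousLinearMap.add_apply, map_sub]
      ring
    linarith
  set h2f : X → ℝ := fun y => δ * ‖y - xe‖ - (w + z') (y - xe) with hh2def
  have hh2xe : h2f xe = 0 := by
    simp only [hh2def, sub_self, norm_zero, mul_zero, map_zero, sub_zero]
  set g2 : X → EReal := fun y => ((h2f y : ℝ) : EReal) with hg2def
  set f1 : X → ℝ := fun y => cc * ‖y - z‖ ^ 2 with hf1def
  have hf1_cont : Continuous f1 :=
    continuous_const.mul (((continuous_id.sub continuous_const).norm).pow 2)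
  have hf1_conv : ∀ p q : X, ∀ a b : ℝ, 0 ≤ a → 0 ≤ b → a + b = 1 →
      f1 (a • p + b • q) ≤ a * f1 p + b * f1 q := by
    intro p q a b ha hb hab
    exact hconv_sq z p q a b ha hb hab
  have hg2_conv : ERealConvexOn g2 := by
    intro p q a b ha hb hab
    simp only [hg2def]
    have hreal : h2f (a • p + b • q) ≤ a * h2f p + b * h2f q := by
      simp only [hh2def]
      have h1 := hconv_norm xe p q a b ha hb hab
      have h3 : δ * ‖(a • p + b • q) - xe‖ ≤ δ * (a * ‖p - xe‖ + b * ‖q - xe‖) :=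
        mul_le_mul_of_nonneg_left h1 hδ.le
      have h4 : (w + z') ((a • p + b • q) - xe) =
          a * (w + z') (p - xe) + b * (w + z') (q - xe) := by
        have hq2 : a • xe + b • xe = xe := by rw [← add_smul, hab, one_smul]
        have heq : (a • p + b • q) - xe = a • (p - xe) + b • (q - xe) := by
          conv_lhs => rw [← hq2]
          rw [smul_sub, smul_sub]
          abel
        rw [heq, map_add, map_smul, map_smul]; rfl
      nlinarith
    calc ((h2f (a • p + b • q) : ℝ) : EReal) ≤ ((a * h2f p + b * h2f q : ℝ) : EReal) :=
          EReal.coe_le_coe_iff.2 hreal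
      _ = (a : EReal) * ((h2f p : ℝ) : EReal) + (b : EReal) * ((h2f q : ℝ) : EReal) := by
          rw [EReal.coe_add, EReal.coe_mul, EReal.coe_mul]
  have hg2_bot : ∀ y, g2 y ≠ ⊥ := fun y => EReal.coe_ne_bot _
  have hg2_top : g2 xe ≠ ⊤ := EReal.coe_ne_top _
  have hmin2 : ∀ y, ((f1 xe : ℝ) : EReal) + g2 xe ≤ ((f1 y : ℝ) : EReal) + g2 y := by
    intro y
    simp only [hg2def]
    rw [← EReal.coe_add, ← EReal.coe_add]
    apply EReal.coe_le_coe_iff.2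
    have := hs y
    simp only [hf1def, hh2def, sub_self, norm_zero, mul_zero, map_zero, sub_zero]
    linarith [hs y]
  obtain ⟨v, hv1, hv2⟩ := sum_rule f1 hf1_cont hf1_conv g2 hg2_conv hg2_bot xe hg2_top hmin2
  -- norm bound on residual
  have hr : ∀ d : X, (w + z' - v) d ≤ δ * ‖d‖ := by
    intro d
    have := hv2 (xe + d)
    rw [add_sub_cancel_left] at this
    simp only [hg2def, hh2xe, EReal.coe_zero, add_zero] at this
    have hreal : (-v) d ≤ h2f (xe + d) := by
      exact_mod_cast this
    simp only [hh2def, add_sub_cancel_left, ContinuousLinearMap.neg_apply] at hreal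
    simp only [ContinuousLinearMap.sub_apply, ContinuousLinearMap.add_apply] at *
    linarith
  have hnorm : ‖w + z' - v‖ ≤ δ := norm_bound_of_subgrad δ hδ.le _ hr
  -- duality map membership
  have hdual_in : ∀ u : X, cc * ‖xe - z‖ ^ 2 + v (u - (xe - z)) ≤ cc * ‖u‖ ^ 2 := by
    intro u
    have := hv1 (u + z)
    simp only [hf1def, add_sub_cancel_right] at this
    rw [show (u + z) - xe = u - (xe - z) by abel] at this
    exact this
  obtain ⟨hd1, hd2⟩ := duality_of_subgrad cc hcc (xe - z) v hdual_in
  have hyJ : (lam • v) ∈ dualityMap (xe - z) := by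
    have hval : (lam • v) (xe - z) = ‖xe - z‖ ^ 2 := by
      rw [ContinuousLinearMap.smul_apply, smul_eq_mul, hd1]
      calc lam * (2 * cc * ‖xe - z‖ ^ 2) = (lam * (2 * cc)) * ‖xe - z‖ ^ 2 := by ring
        _ = ‖xe - z‖ ^ 2 := by rw [hccl, one_mul]
    have hVle : ‖lam • v‖ ≤ ‖xe - z‖ := by
      have hns : ‖lam • v‖ = ‖lam‖ * ‖v‖ := norm_smul lam v
      rw [hns, Real.norm_eq_abs, abs_of_pos hlam]
      calc lam * ‖v‖ ≤ lam * (2 * cc * ‖xe - z‖) :=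
            mul_le_mul_of_nonneg_left hd2 hlam.le
        _ = (lam * (2 * cc)) * ‖xe - z‖ := by ring
        _ = ‖xe - z‖ := by rw [hccl, one_mul]
    refine ⟨hval, ?_⟩
    have hWsq : ‖xe - z‖ ^ 2 ≤ ‖lam • v‖ * ‖xe - z‖ := by
      rw [← hval]
      calc (lam • v) (xe - z) ≤ |(lam • v) (xe - z)| := le_abs_self _
        _ ≤ ‖lam • v‖ * ‖xe - z‖ := by
            rw [← Real.norm_eq_abs]; exact (lam • v).le_opNorm _
    apply le_antisymm
    · nlinarith [sq_nonneg (‖xe - z‖ - ‖lam • v‖)]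
    · exact pow_le_pow_left₀ (norm_nonneg _) hVle 2
  -- assemble
  refine ⟨xe, (lam / ε) • (w + z' - v), lam • v, -w, ?_, hyJ, ?_, ?_⟩
  · apply norm_bound_of_subgrad 1 one_pos.le
    intro d
    have happ : ((lam / ε) • (w + z' - v)) d = lam / ε * ((w + z' - v) d) := rfl
    rw [happ, one_mul]
    calc lam / ε * ((w + z' - v) d) ≤ lam / ε * (δ * ‖d‖) :=
          mul_le_mul_of_nonneg_left (hr d) (by positivity)
      _ = (lam / ε * δ) * ‖d‖ := by ring
      _ = ‖d‖ := by
          rw [show lam / ε * δ = 1 by rw [hδdef]; field_simp]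
          rw [one_mul]
  · intro y
    exact hw2 y
  · rw [smul_smul, show ε * (lam / ε) = lam by field_simp]
    module
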